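/- Let N ≥ 1 and let x_1, …, x_N be distinct nonzero complex numbers. Then as rational functions of z: ∑_{i,j=1}^N Ψ(z,x_j)/(z−x_i) = ∑_{i=1}^N [−2x_i²/(z−x_i)²] + ∑_{i=1}^N [−x_i/(z−x_i)]·(2·∑_{j≠i} (x_i+x_j)/(x_i−x_j) + N + 2) − N², where Ψ(z,x) = −z(z+x)/(z−x). -/
import Mathlib


/-- Vector field of the radial Loewner equation. -/
noncomputable def Psi (z x : ℂ) : ℂ := -z * (z + x) / (z - x)

theorem stmt_4 (N : ℕ) (hN : 1 ≤ N) (x : Fin N → ℂ) (hinj : Function.Injective x)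
    (hx0 : ∀ i, x i ≠ 0) (z : ℂ) (hz : ∀ i, z ≠ x i) :
    ∑ i, ∑ j, Psi z (x j) / (z - x i)
      = ∑ i, (-2 * (x i) ^ 2 / (z - x i) ^ 2)
        + ∑ i, (-(x i) / (z - x i)) *
            (2 * ∑ j ∈ Finset.univ.erase i, (x i + x j) / (x i - x j) + (N : ℂ) + 2)
        - (N : ℂ) ^ 2 := by
  have hzi : ∀ i, z - x i ≠ 0 := fun i => sub_ne_zero.2 (hz i)
  have hxx : ∀ i j : Fin N, i ≠ j → x i - x j ≠ 0 :=
    fun i j hij => sub_ne_zero.2 fun e => hij (hinj e)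
  set g : Fin N → Fin N → ℂ :=
    fun i j => -1 - x i * (x i + x j) / ((x i - x j) * (z - x i)) with hg
  set h : Fin N → Fin N → ℂ :=
    fun i j => -2 * (x i) ^ 2 / ((x i - x j) * (z - x i)) with hh
  have hoff : ∀ i j : Fin N, i ≠ j → Psi z (x j) / (z - x i) = g i j + h j i := by
    intro i j hij
    have h1 := hzi i
    have h2 := hzi j
    have h3 := hxx i j hij
    have h4 := hxx j i hij.symm
    unfold Psi
    simp only [hg, hh]
    field_simp
    ring
  have hswap : ∑ i, ∑ j ∈ Finset.univ.erase i, h j i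
      = ∑ i, ∑ j ∈ Finset.univ.erase i, h i j :=
    Finset.sum_comm' (t' := Finset.univ) (s' := fun j => Finset.univ.erase j)
      (f := fun i j => h j i) (fun i j => by simp [ne_comm])
  have main : ∀ i : Fin N,
      Psi z (x i) / (z - x i)
        + (∑ j ∈ Finset.univ.erase i, g i j + ∑ j ∈ Finset.univ.erase i, h i j)
      = -2 * (x i) ^ 2 / (z - x i) ^ 2
        + (-(x i) / (z - x i)) *
            (2 * ∑ j ∈ Finset.univ.erase i, (x i + x j) / (x i - x j) + (N : ℂ) + 2)
        - (N : ℂ) := by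
    intro i
    have hterm : ∀ j ∈ Finset.univ.erase i, g i j + h i j
        = -1 + (-(x i) / (z - x i)) * (2 * ((x i + x j) / (x i - x j)) + 1) := by
      intro j hj
      have hij : i ≠ j := (Finset.ne_of_mem_erase hj).symm
      have h1 := hzi i
      have h3 := hxx i j hij
      simp only [hg, hh]
      field_simp
      ring
    have hdiag : Psi z (x i) / (z - x i)
        = -1 - 3 * x i / (z - x i) - 2 * (x i) ^ 2 / (z - x i) ^ 2 := by
      unfold Psi
      have h1 := hzi i
      field_simp
      ring
    rw [← Finset.sum_add_distrib, Finset.sum_congr rfl hterm, Finset.sum_add_distrib,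
      Finset.sum_const, ← Finset.mul_sum, Finset.sum_add_distrib, Finset.sum_const,
      ← Finset.mul_sum, hdiag]
    have hcard' : ((Finset.univ.erase i).card : ℂ) = (N : ℂ) - 1 := by
      rw [Finset.card_erase_of_mem (Finset.mem_univ i), Finset.card_univ, Fintype.card_fin]
      push_cast [Nat.cast_sub hN]
      ring
    rw [nsmul_eq_mul, nsmul_eq_mul, hcard']
    have h1 := hzi i
    set S := ∑ j ∈ Finset.univ.erase i, (x i + x j) / (x i - x j)
    field_simp
    ring
  calc ∑ i, ∑ j, Psi z (x j) / (z - x i)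
      = ∑ i, (Psi z (x i) / (z - x i)
          + (∑ j ∈ Finset.univ.erase i, g i j + ∑ j ∈ Finset.univ.erase i, h j i)) := by
        refine Finset.sum_congr rfl fun i _ => ?_
        rw [← Finset.sum_add_distrib, ← Finset.add_sum_erase _ _ (Finset.mem_univ i)]
        congr 1
        exact Finset.sum_congr rfl fun j hj => hoff i j (Finset.ne_of_mem_erase hj).symm
    _ = ∑ i, Psi z (x i) / (z - x i)
          + (∑ i, ∑ j ∈ Finset.univ.erase i, g i j
            + ∑ i, ∑ j ∈ Finset.univ.erase i, h j i) := by
        rw [Finset.sum_add_distrib, Finset.sum_add_distrib]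
    _ = ∑ i, (Psi z (x i) / (z - x i)
          + (∑ j ∈ Finset.univ.erase i, g i j + ∑ j ∈ Finset.univ.erase i, h i j)) := by
        rw [hswap, ← Finset.sum_add_distrib, ← Finset.sum_add_distrib]
    _ = ∑ i, (-2 * (x i) ^ 2 / (z - x i) ^ 2
          + (-(x i) / (z - x i)) *
              (2 * ∑ j ∈ Finset.univ.erase i, (x i + x j) / (x i - x j) + (N : ℂ) + 2)
          - (N : ℂ)) := Finset.sum_congr rfl fun i _ => main i
    _ = ∑ i, (-2 * (x i) ^ 2 / (z - x i) ^ 2)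
        + ∑ i, (-(x i) / (z - x i)) *
            (2 * ∑ j ∈ Finset.univ.erase i, (x i + x j) / (x i - x j) + (N : ℂ) + 2)
        - (N : ℂ) ^ 2 := by
        rw [Finset.sum_sub_distrib, Finset.sum_add_distrib, Finset.sum_const,
          Finset.card_univ, Fintype.card_fin, nsmul_eq_mul]
        ring
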